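/- If G is a finite non-cyclic simple group, then the order superpower graph S(G) is not minimally edge connected. -/

import Mathlib

/-- The degree of a vertex: the number of its neighbours. -/
noncomputable def gDeg {V : Type*} (G : SimpleGraph V) (v : V) : ℕ :=
  (G.neighborSet v).ncard

/-- The minimum degree of a graph. -/
noncomputable def minDeg {V : Type*} (G : SimpleGraph V) : ℕ :=
  sInf (Set.range (gDeg G))

/-- The edge connectivity: the minimum size of a set of edges whose removal
disconnects the graph. -/
noncomputable def edgeConn {V : Type*} (G : SimpleGraph V) : ℕ :=
  sInf {n : ℕ | ∃ S : Set (Sym2 V), S ⊆ G.edgeSet ∧ S.ncard = n ∧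
    ¬ (G.deleteEdges S).Connected}

/-- The vertex connectivity: the minimum size of a set of vertices whose removal
disconnects the graph or leaves a single vertex. -/
noncomputable def vertexConn {V : Type*} (G : SimpleGraph V) : ℕ :=
  sInf {n : ℕ | ∃ S : Set V, S.ncard = n ∧ Sᶜ.Nonempty ∧
    (¬ (G.induce Sᶜ).Preconnected ∨ Sᶜ.ncard = 1)}

/-- A graph is minimally edge connected if deleting any edge decreases the
edge connectivity by one. -/
def MinEdgeConnected {V : Type*} (G : SimpleGraph V) : Prop :=
  ∀ e ∈ G.edgeSet, edgeConn (G.deleteEdges {e}) = edgeConn G - 1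

/-- A graph is minimally connected if deleting any edge decreases the
vertex connectivity by one. -/
def MinConnected {V : Type*} (G : SimpleGraph V) : Prop :=
  ∀ e ∈ G.edgeSet, vertexConn (G.deleteEdges {e}) = vertexConn G - 1

/-- The power graph of a group: distinct `x, y` are adjacent iff one is a
natural power of the other. -/
def powerGraph (G : Type*) [Group G] : SimpleGraph G :=
  SimpleGraph.fromRel (fun x y => ∃ m : ℕ, y = x ^ m)

/-- The enhanced power graph of a group: distinct `x, y` are adjacent iff they
lie in a common cyclic subgroup. -/
def enhancedPowerGraph (G : Type*) [Group G] : SimpleGraph G :=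
  SimpleGraph.fromRel
    (fun x y => ∃ z : G, x ∈ Subgroup.zpowers z ∧ y ∈ Subgroup.zpowers z)

/-- The order superpower graph of a group: distinct `x, y` are adjacent iff the
order of one divides the order of the other. -/
def superpowerGraph (G : Type*) [Group G] : SimpleGraph G :=
  SimpleGraph.fromRel (fun x y => orderOf x ∣ orderOf y)

/-! ### Auxiliary material -/

namespace Stmt10Aux

set_option linter.unusedSectionVars false

open List (Vector)

/-! #### A counting theorem of Frobenius type, modulo a prime

For a prime `q` dividing the order of `G` and any multiple `m` of `q`, the number
of solutions of `x ^ m = 1` in `G` is divisible by `q`.  This is proven by the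
classical McKay-style rotation argument on vectors of length `q` whose product
is an `m/q`-th root of unity. -/

section Frobenius

variable {G : Type*} [Group G]

lemma exists_prod_rotate_eq (l : List G) (j : ℕ) :
    ∃ g : G, (l.rotate j).prod = g⁻¹ * l.prod * g := by
  rcases eq_or_ne l [] with rfl | hl
  · exact ⟨1, by simp⟩
  · have hlen : 0 < l.length := List.length_pos_iff.mpr hl
    have hj : j % l.length ≤ l.length := (Nat.mod_lt _ hlen).le
    refine ⟨(l.take (j % l.length)).prod, ?_⟩
    rw [← List.rotate_mod, List.rotate_eq_drop_append_take hj, List.prod_append]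
    have h2 : l.prod = (l.take (j % l.length)).prod * (l.drop (j % l.length)).prod := by
      rw [← List.prod_append, List.take_append_drop]
    rw [h2]
    group

/-- the set of vectors of length `q` whose product is a `k`-th root of 1. -/
def PW (G : Type*) [Group G] (q k : ℕ) : Set (List.Vector G q) :=
  {v | v.toList.prod ^ k = 1}

lemma rotate_mem_PW {q k : ℕ} {v : List.Vector G q} (hv : v ∈ PW G q k) (j : ℕ) :
    (⟨v.1.rotate j, (v.1.length_rotate j).trans v.2⟩ : List.Vector G q) ∈ PW G q k := by
  obtain ⟨g, hg⟩ := exists_prod_rotate_eq v.1 j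
  show (v.1.rotate j).prod ^ k = 1
  have hc : g⁻¹ * v.1.prod * g = (MulAut.conj g⁻¹) v.1.prod := by
    simp [MulAut.conj_apply]
  have hv' : v.1.prod ^ k = 1 := hv
  rw [hg, hc, ← map_pow, hv', map_one]

/-- vectors with given product-condition are counted by free prefix + root. -/
def pwEquiv (G : Type*) [Group G] (q k : ℕ) :
    (List.Vector G q × {x : G // x ^ k = 1}) ≃ PW G (q + 1) k where
  toFun p := ⟨(p.2.1 * p.1.toList.prod⁻¹) ::ᵥ p.1, by
    show ((p.2.1 * p.1.toList.prod⁻¹) ::ᵥ p.1).toList.prod ^ k = 1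
    rw [List.Vector.toList_cons, List.prod_cons, inv_mul_cancel_right]
    exact p.2.2⟩
  invFun v := ((v.1 : List.Vector G (q+1)).tail, ⟨(v.1 : List.Vector G (q+1)).toList.prod, v.2⟩)
  left_inv p := by
    refine Prod.ext ?_ (Subtype.ext ?_)
    · show ((p.2.1 * p.1.toList.prod⁻¹) ::ᵥ p.1).tail = p.1
      exact List.Vector.tail_cons _ _
    · show ((p.2.1 * p.1.toList.prod⁻¹) ::ᵥ p.1).toList.prod = p.2.1
      rw [List.Vector.toList_cons, List.prod_cons, inv_mul_cancel_right]
  right_inv v := by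
    apply Subtype.ext
    have h1 : (v.1 : List.Vector G (q+1)).toList.prod
        = (v.1 : List.Vector G (q+1)).head * (v.1 : List.Vector G (q+1)).tail.toList.prod := by
      conv_lhs => rw [← (v.1 : List.Vector G (q+1)).cons_head_tail]
      rw [List.Vector.toList_cons, List.prod_cons]
    calc ((v.1 : List.Vector G (q+1)).toList.prod * (v.1 : List.Vector G (q+1)).tail.toList.prod⁻¹)
          ::ᵥ (v.1 : List.Vector G (q+1)).tail
        = (v.1 : List.Vector G (q+1)).head ::ᵥ (v.1 : List.Vector G (q+1)).tail := by
          rw [h1, mul_inv_cancel_right]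
      _ = v.1 := (v.1 : List.Vector G (q+1)).cons_head_tail

def rotPW {q k : ℕ} (j : ℕ) (v : PW G q k) : PW G q k :=
  ⟨⟨v.1.1.rotate j, (v.1.1.length_rotate j).trans v.1.2⟩, rotate_mem_PW v.2 j⟩

lemma rotPW_rotPW {q k : ℕ} (i j : ℕ) (v : PW G q k) :
    rotPW j (rotPW i v) = rotPW (i + j) v := by
  apply Subtype.ext; apply Subtype.ext
  show (v.1.1.rotate i).rotate j = v.1.1.rotate (i + j)
  exact v.1.1.rotate_rotate i j

lemma rotPW_zero {q k : ℕ} (v : PW G q k) : rotPW 0 v = v := by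
  apply Subtype.ext; apply Subtype.ext
  exact v.1.1.rotate_zero

lemma rotPW_mod {q k : ℕ} (j : ℕ) (v : PW G q k) : rotPW (j % q) v = rotPW j v := by
  obtain ⟨⟨l, hl⟩, hv⟩ := v
  apply Subtype.ext; apply Subtype.ext
  show l.rotate (j % q) = l.rotate j
  subst hl
  exact l.rotate_mod j

instance rotAction (q k : ℕ) [NeZero q] :
    MulAction (Multiplicative (ZMod q)) (PW G q k) where
  smul g v := rotPW g.toAdd.val v
  one_smul v := by
    show rotPW (Multiplicative.toAdd (1 : Multiplicative (ZMod q))).val v = v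
    have : (Multiplicative.toAdd (1 : Multiplicative (ZMod q))).val = 0 := by
      simp [ZMod.val_zero]
    rw [this, rotPW_zero]
  mul_smul a b v := by
    show rotPW (Multiplicative.toAdd (a * b)).val v
        = rotPW (Multiplicative.toAdd a).val (rotPW (Multiplicative.toAdd b).val v)
    rw [rotPW_rotPW]
    have h1 : (Multiplicative.toAdd (a * b)).val
        = ((Multiplicative.toAdd b).val + (Multiplicative.toAdd a).val) % q := by
      rw [toAdd_mul, ZMod.val_add, Nat.add_comm]
    rw [h1, rotPW_mod]

lemma smul_eq_rotPW {q k : ℕ} [NeZero q] (g : Multiplicative (ZMod q)) (v : PW G q k) :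
    g • v = rotPW g.toAdd.val v := rfl

open MulAction

lemma rotPW_one_fix {q k : ℕ} {v : PW G q k} (h : rotPW 1 v = v) (j : ℕ) :
    rotPW j v = v := by
  induction j with
  | zero => exact rotPW_zero v
  | succ i ih => rw [← rotPW_rotPW i 1 v, ih, h]

lemma mem_fixedPoints_iff {q k : ℕ} [NeZero q] (hq : 1 < q) (v : PW G q k) :
    v ∈ fixedPoints (Multiplicative (ZMod q)) (PW G q k) ↔ rotPW 1 v = v := by
  haveI : Fact (1 < q) := ⟨hq⟩
  constructor
  · intro h
    have h2 := h (Multiplicative.ofAdd (1 : ZMod q))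
    rw [smul_eq_rotPW] at h2
    have hval : (Multiplicative.toAdd (Multiplicative.ofAdd (1 : ZMod q))).val = 1 := by
      simp [ZMod.val_one]
    rwa [hval] at h2
  · intro h g
    rw [smul_eq_rotPW]
    exact rotPW_one_fix h _

/-- replicate vector as a member of `PW`. -/
def replPW (q k : ℕ) (x : {x : G // x ^ (q * k) = 1}) : PW G q k :=
  ⟨⟨List.replicate q x.1, List.length_replicate (n := q) (a := x.1)⟩, by
    show (List.replicate q x.1).prod ^ k = 1
    rw [List.prod_replicate, ← pow_mul]
    exact x.2⟩

/-- the fixed points correspond to `q*k`-th roots of `1`. -/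
noncomputable def fixedEquiv (q k : ℕ) [NeZero q] (hq : 1 < q) :
    {x : G // x ^ (q * k) = 1} ≃
      fixedPoints (Multiplicative (ZMod q)) (PW G q k) := by
  refine Equiv.ofBijective (f := fun x => ⟨replPW q k x, by
    rw [mem_fixedPoints_iff hq]
    apply Subtype.ext; apply Subtype.ext
    show (List.replicate q x.1).rotate 1 = List.replicate q x.1
    exact List.rotate_replicate x.1 q 1⟩) ⟨?_, ?_⟩
  · intro x y hxy
    apply Subtype.ext
    have h : List.replicate q (x.1 : G) = List.replicate q (y.1 : G) :=
      congrArg (fun z => z.1.1.1) hxy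
    exact List.replicate_right_injective (by omega : q ≠ 0) h
  · rintro ⟨⟨⟨l, hl⟩, hv⟩, hfix⟩
    rw [mem_fixedPoints_iff hq] at hfix
    have hrot : l.rotate 1 = l := congrArg (fun z => z.1.1) hfix
    have hne : Nonempty G := ⟨1⟩
    obtain ⟨x, hx⟩ := List.rotate_one_eq_self_iff_eq_replicate.mp hrot
    have hprod : l.prod = x ^ q := by
      conv_lhs => rw [hx, hl]
      rw [List.prod_replicate]
    refine ⟨⟨x, ?_⟩, ?_⟩
    · have hv2 : l.prod ^ k = 1 := hv
      rw [pow_mul, ← hprod]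
      exact hv2
    · apply Subtype.ext; apply Subtype.ext; apply Subtype.ext
      show List.replicate q x = l
      rw [hx, hl]

variable [Fintype G]

lemma frob_dvd {q : ℕ} (k : ℕ) (hq : q.Prime) (hdvd : q ∣ Fintype.card G) :
    q ∣ Nat.card {x : G // x ^ (q * k) = 1} := by
  haveI : NeZero q := ⟨hq.ne_zero⟩
  haveI : Fact q.Prime := ⟨hq⟩
  have hq1 : 1 < q := hq.one_lt
  obtain ⟨q', hq'⟩ : ∃ q', q = q' + 1 := ⟨q - 1, by omega⟩
  have hcard : Nat.card (PW G q k) = Fintype.card G ^ q' * Nat.card {x : G // x ^ k = 1} := by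
    subst hq'
    rw [← Nat.card_congr (pwEquiv G q' k), Nat.card_prod, Nat.card_eq_fintype_card,
      card_vector]
  have hdvdPW : q ∣ Nat.card (PW G q k) := by
    rw [hcard]
    exact Dvd.dvd.mul_right (hdvd.trans (dvd_pow_self _ (by omega : q' ≠ 0))) _
  have hpg : IsPGroup q (Multiplicative (ZMod q)) := by
    apply IsPGroup.of_card (n := 1)
    rw [Nat.card_eq_fintype_card]
    simp [ZMod.card]
  have hmod := hpg.card_modEq_card_fixedPoints (PW G q k)
  have h0 : Nat.card (fixedPoints (Multiplicative (ZMod q)) (PW G q k)) ≡ 0 [MOD q] :=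
    hmod.symm.trans ((Nat.modEq_zero_iff_dvd).mpr hdvdPW)
  have hdvdfix := (Nat.modEq_zero_iff_dvd).mp h0
  rwa [← Nat.card_congr (fixedEquiv q k hq1)] at hdvdfix

/-- The mod-`q` Frobenius counting theorem. -/
lemma frob_ncard {q m : ℕ} (hq : q.Prime) (hqm : q ∣ m) (hdvd : q ∣ Fintype.card G) :
    q ∣ {x : G | x ^ m = 1}.ncard := by
  obtain ⟨k, rfl⟩ := hqm
  rw [← Nat.card_coe_set_eq]
  exact frob_dvd k hq hdvd

end Frobenius

/-! #### Graph-theoretic helpers -/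

section Graph

open SimpleGraph

variable {V : Type*} [Fintype V]

/-- the set of edges of `H` crossing between `A` and its complement. -/
def cross (H : SimpleGraph V) (A : Set V) : Set (Sym2 V) :=
  {e | ∃ a b, a ∈ A ∧ b ∉ A ∧ H.Adj a b ∧ e = s(a, b)}

lemma cross_subset_edgeSet (H : SimpleGraph V) (A : Set V) : cross H A ⊆ H.edgeSet := by
  rintro e ⟨a, b, _, _, hab, rfl⟩
  exact hab

lemma cross_compl (H : SimpleGraph V) (A : Set V) : cross H Aᶜ = cross H A := by
  ext e
  constructor
  · rintro ⟨a, b, ha, hb, hab, rfl⟩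
    exact ⟨b, a, by simpa using hb, by simpa using ha, hab.symm, Sym2.eq_swap⟩
  · rintro ⟨a, b, ha, hb, hab, rfl⟩
    exact ⟨b, a, hb, by simpa using ha, hab.symm, Sym2.eq_swap⟩

lemma mem_of_walk {H : SimpleGraph V} {A : Set V}
    (hA : ∀ a b, H.Adj a b → a ∈ A → b ∈ A) {u v : V} (w : H.Walk u v) (hu : u ∈ A) :
    v ∈ A := by
  induction w with
  | nil => exact hu
  | cons h p ih => exact ih (hA _ _ h hu)

lemma not_reachable_of_closed {H : SimpleGraph V} {A : Set V}
    (hA : ∀ a b, H.Adj a b → a ∈ A → b ∈ A) {u v : V} (hu : u ∈ A) (hv : v ∉ A) :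
    ¬ H.Reachable u v := by
  rintro ⟨w⟩
  exact hv (mem_of_walk hA w hu)

/-- if all crossing edges of a nontrivial partition are removed, the graph is
disconnected. -/
lemma not_connected_of_cross_subset (H : SimpleGraph V) (A : Set V) (ha : A.Nonempty)
    (hac : Aᶜ.Nonempty) {S : Set (Sym2 V)} (hS : cross H A ⊆ S) :
    ¬ (H.deleteEdges S).Connected := by
  obtain ⟨u, hu⟩ := ha
  obtain ⟨v, hv⟩ := hac
  intro hc
  have hclosed : ∀ a b, (H.deleteEdges S).Adj a b → a ∈ A → b ∈ A := by
    intro a b hab ha'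
    by_contra hb
    rw [deleteEdges_adj] at hab
    exact hab.2 (hS ⟨a, b, ha', hb, hab.1, rfl⟩)
  exact not_reachable_of_closed hclosed hu hv (hc.preconnected u v)

/-- from a disconnection, extract a partition whose crossing edges are inside `S`. -/
lemma exists_part [Nonempty V] {H : SimpleGraph V} {S : Set (Sym2 V)}
    (h : ¬ (H.deleteEdges S).Connected) :
    ∃ A : Set V, A.Nonempty ∧ Aᶜ.Nonempty ∧ cross H A ⊆ S := by
  rw [SimpleGraph.connected_iff] at h
  push_neg at h
  have hpre : ¬ (H.deleteEdges S).Preconnected := fun hp => not_isEmpty_of_nonempty V (h hp)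
  unfold SimpleGraph.Preconnected at hpre
  push_neg at hpre
  obtain ⟨u, v, huv⟩ := hpre
  refine ⟨{w | (H.deleteEdges S).Reachable u w}, ⟨u, Reachable.refl u⟩, ⟨v, huv⟩, ?_⟩
  rintro e ⟨a, b, ha, hb, hab, rfl⟩
  by_contra hes
  exact hb (ha.trans (SimpleGraph.Adj.reachable (by rw [deleteEdges_adj]; exact ⟨hab, hes⟩)))

/-- the "star" at a vertex: all of its incident edges. -/
def star (H : SimpleGraph V) (z : V) : Set (Sym2 V) :=
  (fun w => s(z, w)) '' (H.neighborSet z)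

lemma star_subset_edgeSet (H : SimpleGraph V) (z : V) : star H z ⊆ H.edgeSet := by
  rintro e ⟨w, hw, rfl⟩
  exact hw

lemma star_ncard (H : SimpleGraph V) (z : V) : (star H z).ncard = gDeg H z :=
  Set.ncard_image_of_injOn (fun _ _ _ _ hab => Sym2.congr_right.mp hab)

lemma del_star_not_connected [Nontrivial V] (H : SimpleGraph V) (z : V) :
    ¬ (H.deleteEdges (star H z)).Connected := by
  obtain ⟨w, hw⟩ := exists_ne z
  intro hc
  have hclosed : ∀ a b, (H.deleteEdges (star H z)).Adj a b →
      a ∈ ({z} : Set V) → b ∈ ({z} : Set V) := by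
    intro a b hab ha
    rw [Set.mem_singleton_iff] at ha
    subst ha
    rw [deleteEdges_adj] at hab
    exact absurd ⟨b, hab.1, rfl⟩ hab.2
  exact not_reachable_of_closed hclosed rfl (by simpa using hw) (hc.preconnected z w)

lemma edgeConn_le_gDeg [Nontrivial V] (H : SimpleGraph V) (z : V) :
    edgeConn H ≤ gDeg H z :=
  Nat.sInf_le ⟨star H z, star_subset_edgeSet H z, star_ncard H z, del_star_not_connected H z⟩

lemma del_all_not_connected [Nontrivial V] (H : SimpleGraph V) :
    ¬ (H.deleteEdges H.edgeSet).Connected := by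
  obtain ⟨u, v, huv⟩ := exists_pair_ne V
  intro hc
  have hclosed : ∀ a b, (H.deleteEdges H.edgeSet).Adj a b →
      a ∈ ({u} : Set V) → b ∈ ({u} : Set V) := by
    intro a b hab _
    rw [deleteEdges_adj] at hab
    exact absurd hab.1 hab.2
  exact not_reachable_of_closed hclosed rfl (by simpa using huv.symm) (hc.preconnected u v)

lemma edgeConn_pos [Nontrivial V] (H : SimpleGraph V) (hconn : H.Connected) :
    1 ≤ edgeConn H := by
  have hne : {n : ℕ | ∃ S : Set (Sym2 V), S ⊆ H.edgeSet ∧ S.ncard = n ∧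
      ¬ (H.deleteEdges S).Connected}.Nonempty :=
    ⟨H.edgeSet.ncard, H.edgeSet, subset_rfl, rfl, del_all_not_connected H⟩
  obtain ⟨S, hsub, hcard, hdisc⟩ := Nat.sInf_mem hne
  rcases Nat.eq_zero_or_pos (edgeConn H) with h0 | h
  · rw [edgeConn] at h0
    rw [h0] at hcard
    rw [Set.ncard_eq_zero (Set.toFinite S)] at hcard
    subst hcard
    rw [SimpleGraph.deleteEdges_empty] at hdisc
    exact absurd hconn hdisc
  · exact h

end Graph

/-! #### The superpower graph -/

section Superpower

open SimpleGraph

variable {G : Type*} [Group G] [Fintype G]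

lemma spg_adj {x y : G} :
    (superpowerGraph G).Adj x y ↔ x ≠ y ∧ (orderOf x ∣ orderOf y ∨ orderOf y ∣ orderOf x) := by
  simp [superpowerGraph, SimpleGraph.fromRel_adj]

lemma spg_adj_one {x : G} (hx : x ≠ 1) : (superpowerGraph G).Adj 1 x := by
  rw [spg_adj]
  exact ⟨(Ne.symm hx), Or.inl (by simp)⟩

lemma spg_connected : (superpowerGraph G).Connected := by
  rw [SimpleGraph.connected_iff]
  refine ⟨?_, ⟨1⟩⟩
  intro x y
  have hx : (superpowerGraph G).Reachable 1 x := by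
    rcases eq_or_ne x 1 with rfl | hx
    · exact Reachable.refl 1
    · exact (spg_adj_one hx).reachable
  have hy : (superpowerGraph G).Reachable 1 y := by
    rcases eq_or_ne y 1 with rfl | hy
    · exact Reachable.refl 1
    · exact (spg_adj_one hy).reachable
  exact hx.symm.trans hy

/-- key crossing bound: a partition separating `1` from some non-identity `x` has at
least `gDeg x` crossing edges. -/
lemma cross_ge_deg (A : Set G) (h1 : (1:G) ∈ A) {x : G} (hx : x ∉ A) (hx1 : x ≠ 1) :
    gDeg (superpowerGraph G) x ≤ (cross (superpowerGraph G) A).ncard := by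
  set Γ := superpowerGraph G
  set E1 : Set (Sym2 G) := (fun a => s(x, a)) '' (Γ.neighborSet x ∩ A) with hE1
  set E2 : Set (Sym2 G) := (fun b => s((1:G), b)) '' (Aᶜ \ {x}) with hE2
  have hE1sub : E1 ⊆ cross Γ A := by
    rintro e ⟨a, ⟨hadj, haA⟩, rfl⟩
    exact ⟨a, x, haA, hx, ((Γ.mem_neighborSet x a).mp hadj).symm, Sym2.eq_swap⟩
  have hE2sub : E2 ⊆ cross Γ A := by
    rintro e ⟨b, ⟨hbA, hbx⟩, rfl⟩
    have hb1 : b ≠ 1 := by rintro rfl; exact hbA h1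
    exact ⟨1, b, h1, hbA, spg_adj_one hb1, rfl⟩
  have hdisj : Disjoint E1 E2 := by
    rw [Set.disjoint_left]
    rintro e ⟨a, ⟨_, _⟩, rfl⟩ ⟨b, ⟨hbA, hbx⟩, heq⟩
    simp only [Sym2.eq, Sym2.rel_iff', Prod.mk.injEq, Prod.swap_prod_mk] at heq
    rcases heq with ⟨h1x, _⟩ | ⟨h1a, hbx'⟩
    · exact hx1 h1x.symm
    · exact hbx (by simp [hbx'])
  have hcard1 : E1.ncard = (Γ.neighborSet x ∩ A).ncard :=
    Set.ncard_image_of_injOn (fun a _ b _ hab => Sym2.congr_right.mp hab)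
  have hcard2 : E2.ncard = (Aᶜ \ {x}).ncard :=
    Set.ncard_image_of_injOn (fun a _ b _ hab => Sym2.congr_right.mp hab)
  have hcover : Γ.neighborSet x ⊆ (Γ.neighborSet x ∩ A) ∪ (Aᶜ \ {x}) := by
    intro y hy
    by_cases hyA : y ∈ A
    · exact Or.inl ⟨hy, hyA⟩
    · exact Or.inr ⟨hyA, fun h => ((Γ.mem_neighborSet x y).mp hy).ne' (by simpa using h)⟩
  calc gDeg Γ x = (Γ.neighborSet x).ncard := rfl
    _ ≤ ((Γ.neighborSet x ∩ A) ∪ (Aᶜ \ {x})).ncard := Set.ncard_le_ncard hcover (Set.toFinite _)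
    _ ≤ (Γ.neighborSet x ∩ A).ncard + (Aᶜ \ {x}).ncard := Set.ncard_union_le _ _
    _ = E1.ncard + E2.ncard := by rw [hcard1, hcard2]
    _ = (E1 ∪ E2).ncard := (Set.ncard_union_eq hdisj (Set.toFinite _) (Set.toFinite _)).symm
    _ ≤ (cross Γ A).ncard :=
        Set.ncard_le_ncard (Set.union_subset hE1sub hE2sub) (Set.toFinite _)

/-- neighbours of an element of prime order `p`. -/
lemma neighborSet_prime {p : ℕ} (hp : p.Prime) {x : G} (hx : orderOf x = p) :
    (superpowerGraph G).neighborSet x = ({1} ∪ {h : G | p ∣ orderOf h}) \ {x} := by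
  ext h
  rw [SimpleGraph.mem_neighborSet, spg_adj]
  simp only [Set.mem_diff, Set.mem_union, Set.mem_singleton_iff, Set.mem_setOf_eq]
  constructor
  · rintro ⟨hne, hd⟩
    refine ⟨?_, fun e => hne e.symm⟩
    rcases hd with hd | hd
    · exact Or.inr (hx ▸ hd)
    · rw [hx, Nat.dvd_prime hp] at hd
      rcases hd with h1 | hp'
      · exact Or.inl (orderOf_eq_one_iff.mp h1)
      · exact Or.inr (hp' ▸ dvd_rfl)
  · rintro ⟨hd, hne⟩
    refine ⟨fun e => hne e.symm, ?_⟩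
    rcases hd with rfl | hd
    · exact Or.inr (by simp)
    · exact Or.inl (hx ▸ hd)

/-- neighbours of an element whose order is divisibility-maximal. -/
lemma neighborSet_max {g : G} (hmax : ∀ h : G, orderOf g ∣ orderOf h → orderOf h = orderOf g) :
    (superpowerGraph G).neighborSet g = {h : G | h ^ (orderOf g) = 1} \ {g} := by
  ext h
  rw [SimpleGraph.mem_neighborSet, spg_adj]
  simp only [Set.mem_diff, Set.mem_singleton_iff, Set.mem_setOf_eq]
  constructor
  · rintro ⟨hne, hd | hd⟩
    · refine ⟨?_, fun e => hne e.symm⟩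
      rw [← hmax h hd]
      exact pow_orderOf_eq_one h
    · exact ⟨orderOf_dvd_iff_pow_eq_one.mp hd, fun e => hne e.symm⟩
  · rintro ⟨hpow, hne⟩
    exact ⟨fun e => hne e.symm, Or.inr (orderOf_dvd_iff_pow_eq_one.mpr hpow)⟩

lemma exists_max_order {q : ℕ} (hq : q.Prime) (hqn : q ∣ Fintype.card G) :
    ∃ g : G, q ∣ orderOf g ∧ ∀ h : G, orderOf g ∣ orderOf h → orderOf h = orderOf g := by
  classical
  haveI : Fact q.Prime := ⟨hq⟩
  obtain ⟨x, hx⟩ := exists_prime_orderOf_dvd_card q hqn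
  set s : Finset ℕ := (Finset.range (Fintype.card G + 1)).filter
      (fun d => q ∣ d ∧ ∃ g : G, orderOf g = d) with hs
  have hord_mem : ∀ h : G, q ∣ orderOf h → orderOf h ∈ s := by
    intro h hdvd
    rw [hs, Finset.mem_filter, Finset.mem_range]
    have hle : orderOf h ≤ Fintype.card G :=
      Nat.le_of_dvd Fintype.card_pos (orderOf_dvd_card)
    exact ⟨by omega, hdvd, h, rfl⟩
  have hne : s.Nonempty := ⟨orderOf x, hord_mem x (by rw [hx])⟩
  set m := s.max' hne with hm
  have hms : m ∈ s := s.max'_mem hne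
  rw [hs, Finset.mem_filter] at hms
  obtain ⟨_, hqm, g, hg⟩ := hms
  refine ⟨g, by rw [hg]; exact hqm, ?_⟩
  intro h hdvd
  rw [hg] at hdvd ⊢
  have h1 : orderOf h ∈ s := hord_mem h (hqm.trans hdvd)
  have h2 : orderOf h ≤ m := s.le_max' _ h1
  have h3 : m ≤ orderOf h := Nat.le_of_dvd (orderOf_pos h) hdvd
  omega

lemma exists_two_primes [IsSimpleGroup G] (hnc : ¬ IsCyclic G) :
    ∃ p q : ℕ, p.Prime ∧ q.Prime ∧ p ∣ Fintype.card G ∧ q ∣ Fintype.card G ∧ p ≠ q := by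
  have hcard : 1 < Fintype.card G := Fintype.one_lt_card
  obtain ⟨p, hp, hpd⟩ := Nat.exists_prime_and_dvd (by omega : Fintype.card G ≠ 1)
  by_contra hcon
  push_neg at hcon
  have huniq : ∀ {r : ℕ}, r.Prime → r ∣ Fintype.card G → r = p := by
    intro r hr hrd
    by_contra hne
    exact hne (hcon r p hr hp hrd hpd)
  have hpow := Nat.eq_prime_pow_of_unique_prime_dvd (n := Fintype.card G) (by omega)
      (fun {d} hd hdd => huniq hd hdd)
  have hpg : IsPGroup p G := IsPGroup.of_card (by rw [Nat.card_eq_fintype_card, hpow])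
  haveI : Fact p.Prime := ⟨hp⟩
  haveI hcenter : Nontrivial (Subgroup.center G) := hpg.center_nontrivial
  have hcn : (Subgroup.center G).Normal := inferInstance
  rcases hcn.eq_bot_or_eq_top with hbot | htop
  · rw [hbot] at hcenter
    exact absurd hcenter (not_nontrivial _)
  · letI : CommGroup G := Group.commGroupOfCenterEqTop htop
    exact hnc IsSimpleGroup.isCyclic

lemma roots_compl_eq {p : ℕ} (hp : p.Prime) :
    {x : G | x ^ (Fintype.card G / p ^ (Fintype.card G).factorization p) = 1}
      = {h : G | p ∣ orderOf h}ᶜ := by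
  set n := Fintype.card G
  have hn0 : n ≠ 0 := Fintype.card_ne_zero
  set m := n / p ^ n.factorization p with hm
  have hcop : Nat.Coprime p m := Nat.coprime_ordCompl hp hn0
  ext h
  simp only [Set.mem_setOf_eq, Set.mem_compl_iff]
  rw [← orderOf_dvd_iff_pow_eq_one]
  constructor
  · intro hdvd hpd
    exact ((Nat.Prime.coprime_iff_not_dvd hp).mp hcop) (hpd.trans hdvd)
  · intro hnd
    have hord : orderOf h ∣ n := orderOf_dvd_card
    have hsplit : p ^ n.factorization p * m = n := Nat.ordProj_mul_ordCompl_eq_self n p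
    have hcop2 : Nat.Coprime (orderOf h) (p ^ n.factorization p) :=
      Nat.Coprime.pow_right _ ((Nat.Prime.coprime_iff_not_dvd hp).mpr hnd).symm
    refine hcop2.dvd_of_dvd_mul_left ?_
    rw [hsplit]
    exact hord

/-- If not all non-identity vertices have the same degree, there is one with degree
greater than the minimum; and in a non-cyclic simple group the degrees cannot all be
equal. -/
lemma exists_big_deg [IsSimpleGroup G] (hnc : ¬ IsCyclic G) :
    ∃ y : G, y ≠ 1 ∧ minDeg (superpowerGraph G) + 1 ≤ gDeg (superpowerGraph G) y := by
  classical
  set Γ := superpowerGraph G with hΓ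
  set δ := minDeg Γ with hδdef
  by_contra hcon
  push_neg at hcon
  have hlb : ∀ y : G, δ ≤ gDeg Γ y := fun y => Nat.sInf_le ⟨y, rfl⟩
  have heq : ∀ y : G, y ≠ 1 → gDeg Γ y = δ := by
    intro y hy
    have := hcon y hy
    have := hlb y
    omega
  obtain ⟨p, q, hp, hq, hpn, hqn, hpq⟩ := exists_two_primes hnc
  set n := Fintype.card G with hn
  -- Claim A : q ∣ δ
  haveI : Fact p.Prime := ⟨hp⟩
  obtain ⟨x, hx⟩ := exists_prime_orderOf_dvd_card p hpn
  have hx1 : x ≠ 1 := by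
    intro h
    rw [h, orderOf_one] at hx
    exact absurd hx hp.one_lt.ne
  set Y : Set G := {h : G | p ∣ orderOf h} with hY
  have h1Y : (1:G) ∉ Y := by
    simp only [hY, Set.mem_setOf_eq, orderOf_one, Nat.dvd_one]
    exact hp.one_lt.ne'
  have hxY : x ∈ Y := by
    show p ∣ orderOf x
    rw [hx]
  have hNx : Γ.neighborSet x = ({1} ∪ Y) \ {x} := neighborSet_prime hp hx
  have hgdx : gDeg Γ x = ({1} ∪ Y).ncard - 1 := by
    rw [gDeg, hNx, Set.ncard_diff_singleton_of_mem (Set.mem_union_right _ hxY)]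
  have hUcard : ({1} ∪ Y).ncard = 1 + Y.ncard := by
    rw [Set.ncard_union_eq (Set.disjoint_singleton_left.mpr h1Y) (Set.toFinite _)
      (Set.toFinite _), Set.ncard_singleton]
  have hYδ : Y.ncard = δ := by
    have := heq x hx1
    omega
  have hcompl : Y.ncard + Yᶜ.ncard = n := by
    rw [hn, ← Nat.card_eq_fintype_card]
    exact Set.ncard_add_ncard_compl Y
  have hδn : δ ≤ n := by omega
  have hroots : {x : G | x ^ (n / p ^ n.factorization p) = 1} = Yᶜ := roots_compl_eq hp
  have hqm : q ∣ n / p ^ n.factorization p := by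
    have hsplit : p ^ n.factorization p * (n / p ^ n.factorization p) = n :=
      Nat.ordProj_mul_ordCompl_eq_self n p
    have : q ∣ p ^ n.factorization p * (n / p ^ n.factorization p) := by
      rw [hsplit]; exact hqn
    rcases (Nat.Prime.dvd_mul hq).mp this with h | h
    · exact absurd ((Nat.prime_dvd_prime_iff_eq hq hp).mp (hq.dvd_of_dvd_pow h)) (Ne.symm hpq)
    · exact h
  have hqroots : q ∣ Yᶜ.ncard := by
    rw [← hroots]
    exact frob_ncard hq hqm hqn
  have hqδ : q ∣ δ := by
    have h1 : Yᶜ.ncard = n - δ := by omega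
    have h2 : q ∣ n - δ := h1 ▸ hqroots
    have h3 : n - (n - δ) = δ := by omega
    exact h3 ▸ Nat.dvd_sub hqn h2
  -- Claim B : q ∣ δ + 1
  obtain ⟨g, hqg, hmax⟩ := exists_max_order hq hqn
  have hg1 : g ≠ 1 := by
    intro h
    rw [h, orderOf_one] at hqg
    have := Nat.le_of_dvd (by omega) hqg
    have := hq.two_le
    omega
  have hNg : Γ.neighborSet g = {h : G | h ^ (orderOf g) = 1} \ {g} := neighborSet_max hmax
  have hgR : g ∈ {h : G | h ^ (orderOf g) = 1} := by
    simp only [Set.mem_setOf_eq]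
    exact pow_orderOf_eq_one g
  have hgdg : gDeg Γ g = {h : G | h ^ (orderOf g) = 1}.ncard - 1 := by
    rw [gDeg, hNg, Set.ncard_diff_singleton_of_mem hgR]
  have hRpos : 0 < {h : G | h ^ (orderOf g) = 1}.ncard :=
    (Set.ncard_pos (Set.toFinite _)).mpr ⟨g, hgR⟩
  have hRcard : {h : G | h ^ (orderOf g) = 1}.ncard = δ + 1 := by
    have := heq g hg1
    omega
  have hqR : q ∣ δ + 1 := by
    rw [← hRcard]
    exact frob_ncard hq hqg hqn
  have : q ∣ 1 := by
    have h3 : (δ + 1) - δ = 1 := by omega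
    exact h3 ▸ Nat.dvd_sub hqR hqδ
  have := Nat.le_of_dvd (by omega) this
  have := hq.two_le
  omega

end Superpower

end Stmt10Aux

/-- If `G` is a finite non-cyclic simple group, then its order
superpower graph is not minimally edge connected. -/
theorem stmt_10 (G : Type*) [Group G] [Fintype G] [IsSimpleGroup G]
    (hnc : ¬ IsCyclic G) :
    ¬ MinEdgeConnected (superpowerGraph G) := by
  classical
  intro hmin
  open Stmt10Aux in
  set Γ := superpowerGraph G with hΓ
  set δ := minDeg Γ with hδ
  -- the minimum degree is attained
  have hrange : (Set.range (gDeg Γ)).Nonempty := ⟨gDeg Γ 1, 1, rfl⟩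
  obtain ⟨z, hz⟩ := Nat.sInf_mem hrange
  -- a vertex of more than minimum degree
  obtain ⟨y, hy1, hydeg⟩ := Stmt10Aux.exists_big_deg hnc
  have hadj : Γ.Adj 1 y := Stmt10Aux.spg_adj_one hy1
  set e : Sym2 G := s((1:G), y) with he_def
  have he : e ∈ Γ.edgeSet := hadj
  have hmineq := hmin e he
  set lam := edgeConn Γ with hlam
  have hlam1 : 1 ≤ lam := Stmt10Aux.edgeConn_pos Γ Stmt10Aux.spg_connected
  have hlamδ : lam ≤ δ := by
    have := Stmt10Aux.edgeConn_le_gDeg Γ z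
    rw [hz] at this
    exact this
  set Γ' := Γ.deleteEdges {e} with hΓ'
  have hset_ne : {n : ℕ | ∃ S : Set (Sym2 G), S ⊆ Γ'.edgeSet ∧ S.ncard = n ∧
      ¬ (Γ'.deleteEdges S).Connected}.Nonempty :=
    ⟨Γ'.edgeSet.ncard, Γ'.edgeSet, subset_rfl, rfl, Stmt10Aux.del_all_not_connected Γ'⟩
  obtain ⟨S', hS'sub, hS'card, hS'disc⟩ := Nat.sInf_mem hset_ne
  have hS'val : S'.ncard = lam - 1 := by
    rw [hS'card]
    show edgeConn Γ' = lam - 1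
    rw [hΓ']
    exact hmineq
  have hkey : lam ≤ S'.ncard := by
    have hdd : ¬ (Γ.deleteEdges ({e} ∪ S')).Connected := by
      rw [← SimpleGraph.deleteEdges_deleteEdges]
      exact hS'disc
    obtain ⟨A, hAne, hAcne, hcross⟩ := Stmt10Aux.exists_part hdd
    by_cases hecross : e ∈ Stmt10Aux.cross Γ A
    · have hsep : ((1:G) ∈ A ∧ y ∉ A) ∨ ((1:G) ∉ A ∧ y ∈ A) := by
        obtain ⟨a, b, haA, hbA, _, heab⟩ := hecross
        rw [he_def] at heab
        simp only [Sym2.eq, Sym2.rel_iff', Prod.mk.injEq, Prod.swap_prod_mk] at heab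
        rcases heab with ⟨h1, h2⟩ | ⟨h1, h2⟩
        · exact Or.inl ⟨by rw [h1]; exact haA, by rw [h2]; exact hbA⟩
        · exact Or.inr ⟨by rw [h1]; exact hbA, by rw [h2]; exact haA⟩
      have hbound : δ + 1 ≤ (Stmt10Aux.cross Γ A).ncard := by
        rcases hsep with ⟨h1A, hyA⟩ | ⟨h1A, hyA⟩
        · exact le_trans hydeg (Stmt10Aux.cross_ge_deg A h1A hyA hy1)
        · have := Stmt10Aux.cross_ge_deg Aᶜ (by simpa using h1A) (x := y)
            (by simpa using hyA) hy1
          rw [Stmt10Aux.cross_compl] at this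
          exact le_trans hydeg this
      have hsub2 : Stmt10Aux.cross Γ A \ {e} ⊆ S' := by
        rintro f ⟨hf, hfe⟩
        rcases hcross hf with h | h
        · exact absurd h hfe
        · exact h
      have h1 : (Stmt10Aux.cross Γ A \ {e}).ncard = (Stmt10Aux.cross Γ A).ncard - 1 :=
        Set.ncard_diff_singleton_of_mem hecross
      have h2 : (Stmt10Aux.cross Γ A \ {e}).ncard ≤ S'.ncard :=
        Set.ncard_le_ncard hsub2 (Set.toFinite _)
      omega
    · have hsub2 : Stmt10Aux.cross Γ A ⊆ S' := by
        intro f hf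
        rcases hcross hf with h | h
        · exact absurd (h ▸ hf) hecross
        · exact h
      have hdisc2 : ¬ (Γ.deleteEdges (Stmt10Aux.cross Γ A)).Connected :=
        Stmt10Aux.not_connected_of_cross_subset Γ A hAne hAcne subset_rfl
      have hle : lam ≤ (Stmt10Aux.cross Γ A).ncard :=
        Nat.sInf_le ⟨Stmt10Aux.cross Γ A, Stmt10Aux.cross_subset_edgeSet Γ A, rfl, hdisc2⟩
      have h2 : (Stmt10Aux.cross Γ A).ncard ≤ S'.ncard :=
        Set.ncard_le_ncard hsub2 (Set.toFinite _)
      omega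
  omega
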